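/- For all s, t ∈ μ_r, v ∈ A_1, and w ∈ A_r: (zv) ⋄_s (z_t^δ w) = z(v ⋄_s z_t^δ w) + z_t^δ(zv ⋄_t w) − z z_t^δ(v ⋄_t w). -/

import Mathlib

open FreeAlgebra

/-- Alphabet of `A_1 = ℚ⟨x,y⟩`. -/
inductive LetA : Type | x : LetA | y : LetA

/-- Alphabet of `A_r = ℚ⟨x, y_s : s ∈ μ_r⟩`; the group `G` plays the role of `μ_r`. -/
inductive LetR (G : Type) : Type | x : LetR G | y : G → LetR G

/-- `A_1 = ℚ⟨x, y⟩`. -/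
abbrev A1 : Type := FreeAlgebra ℚ LetA

/-- `A_r = ℚ⟨x, y_s : s ∈ μ_r⟩`. -/
abbrev Ar (G : Type) : Type := FreeAlgebra ℚ (LetR G)

noncomputable def X1 : A1 := ι ℚ LetA.x
noncomputable def Y1 : A1 := ι ℚ LetA.y

variable {G : Type} [CommGroup G]

noncomputable def Xr : Ar G := ι ℚ LetR.x
noncomputable def Yr (s : G) : Ar G := ι ℚ (LetR.y s)

/-- `z = x + y_1`. -/
noncomputable def zet : Ar G := Xr + Yr 1

open scoped Classical in
/-- `z_s^δ = x + δ(s) y_s` with `δ(1) = 0`, `δ(s) = 1` otherwise. -/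
noncomputable def zdel (s : G) : Ar G := if s = 1 then Xr else Xr + Yr s

/-- The involutive automorphism `φ` of `A_r`: `φ(x) = z`, `φ(y_s) = z_s^δ - z`. -/
noncomputable def phi : Ar G →ₐ[ℚ] Ar G :=
  lift ℚ (fun l => match l with
    | LetR.x => zet
    | LetR.y s => zdel s - zet)

/-- The natural embedding `A_1 → A_r`, `x ↦ x`, `y ↦ y_1`. -/
noncomputable def jm : A1 →ₐ[ℚ] Ar G :=
  lift ℚ (fun l => match l with
    | LetA.x => Xr
    | LetA.y => Yr 1)

open scoped Classical in
/-- The anti-automorphism `τ` of `A_r`: `τ(x) = y_1`, `τ(y_1) = x`, `τ(y_s) = -y_s` (`s ≠ 1`). -/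
noncomputable def tauR : Ar G →ₗ[ℚ] Ar G :=
  (MulOpposite.opLinearEquiv ℚ).symm.toLinearMap ∘ₗ
    (lift ℚ (fun l => match l with
      | LetR.x => MulOpposite.op (Yr 1)
      | LetR.y s => MulOpposite.op (if s = 1 then Xr else -(Yr s)) ) :
        Ar G →ₐ[ℚ] (Ar G)ᵐᵒᵖ).toLinearMap

/-- The anti-automorphism `τ` of `A_1`: `τ(x) = y`, `τ(y) = x`. -/
noncomputable def tau1 : A1 →ₗ[ℚ] A1 :=
  (MulOpposite.opLinearEquiv ℚ).symm.toLinearMap ∘ₗ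
    (lift ℚ (fun l => match l with
      | LetA.x => MulOpposite.op Y1
      | LetA.y => MulOpposite.op X1) : A1 →ₐ[ℚ] A1ᵐᵒᵖ).toLinearMap

/-- `wordP [(a₁,s₁),...,(a_l,s_l)] = x^{a₁} y_{s₁} ⋯ x^{a_l} y_{s_l}`,
i.e. the word `z_{a₁+1, s₁} ⋯ z_{a_l+1, s_l}`. -/
noncomputable def wordP (L : List (ℕ × G)) : Ar G :=
  (L.map (fun p => Xr ^ p.1 * Yr p.2)).prod

/-- Cumulative-product reindexing of subscripts: this realizes the composition `I ∘ M_s`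
on subscript lists, sending `(s₁, s₂, …, s_l)` to `(s s₁, s s₁ s₂, …, s s₁ ⋯ s_l)`. -/
def cumul : G → List (ℕ × G) → List (ℕ × G)
  | _, [] => []
  | g, p :: L => (p.1, g * p.2) :: cumul (g * p.2) L

/-- All the data entering the definition of the diamond products `⋄_s`:
the harmonic product `*`, the maps `ψ_s = φ ∘ I ∘ M_s`, and the family of
`ℚ`-bilinear diamond products `D s : A_1 × A_r → A_r` (together with the
corestriction `D1` of `⋄_1` to `A_1 × A_1 → A_1`), each characterized by its
defining recursive rules. -/
structure DiamondSetup (G : Type) [CommGroup G] where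
  /-- the harmonic product -/
  hst : Ar G →ₗ[ℚ] Ar G →ₗ[ℚ] Ar G
  one_hst : ∀ w, hst 1 w = w
  hst_one : ∀ v, hst v 1 = v
  hst_xr : ∀ v w, hst (v * Xr) w = hst v w * Xr
  hst_xl : ∀ v w, hst v (w * Xr) = hst v w * Xr
  hst_yy : ∀ (v w : Ar G) (s t : G), hst (v * Yr s) (w * Yr t) =
      hst v (w * Yr t) * Yr s + hst (v * Yr s) w * Yr t + hst v w * (Xr * Yr (s * t))
  /-- the linear automorphisms `ψ_s = φ ∘ I ∘ M_s` -/
  psi : G → (Ar G ≃ₗ[ℚ] Ar G)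
  psi_spec : ∀ (s : G) (L : List (ℕ × G)) (a : ℕ),
      psi s (wordP L * Xr ^ a) = phi (wordP (cumul s L) * Xr ^ a)
  /-- the diamond products `⋄_s : A_1 × A_r → A_r` -/
  D : G → A1 →ₗ[ℚ] Ar G →ₗ[ℚ] Ar G
  one_D : ∀ (s : G) (w : Ar G), D s 1 w = w
  D_one : ∀ (s : G) (v : A1), D s v 1 = psi s (phi (jm v))
  Dxx : ∀ (s : G) (v : A1) (w : Ar G), D s (v * X1) (w * Xr) =
      D s v (w * Xr) * Xr - D s (v * Y1) w * Xr
  Dyx : ∀ (s : G) (v : A1) (w : Ar G), D s (v * Y1) (w * Xr) =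
      D s v (w * Xr) * Yr 1 + D s (v * Y1) w * Xr
  Dxy : ∀ (s : G) (v : A1) (w : Ar G), D s (v * X1) (w * Yr 1) =
      D s v (w * Yr 1) * Xr + D s (v * X1) w * Yr 1
  Dyy : ∀ (s : G) (v : A1) (w : Ar G), D s (v * Y1) (w * Yr 1) =
      D s v (w * Yr 1) * Yr 1 - D s (v * X1) w * Yr 1
  Dxyt : ∀ (s t : G), t ≠ 1 → ∀ (v : A1) (w : Ar G), D s (v * X1) (w * Yr t) =
      D s v (w * Yr t) * Xr + D s v (w * (Xr + Yr t)) * Yr t - D s (v * Y1) w * Yr t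
  Dyyt : ∀ (s t : G), t ≠ 1 → ∀ (v : A1) (w : Ar G), D s (v * Y1) (w * Yr t) =
      D s v (w * Yr t) * Yr 1 - D s v (w * (Xr + Yr t)) * Yr t + D s (v * Y1) w * Yr t
  /-- `⋄_1` as a product `A_1 × A_1 → A_1` -/
  D1 : A1 →ₗ[ℚ] A1 →ₗ[ℚ] A1
  D1_spec : ∀ u v : A1, jm (D1 u v) = D 1 u (jm v)





section Aux
variable {G : Type} [CommGroup G]

lemma zdel_one : (zdel 1 : Ar G) = Xr := if_pos rfl
lemma zdel_ne {t : G} (ht : t ≠ 1) : (zdel t : Ar G) = Xr + Yr t := if_neg ht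

@[simp] lemma phi_x : (phi (Xr : Ar G)) = zet := by simp [phi, Xr, lift_ι_apply]
@[simp] lemma phi_y (s : G) : (phi (Yr s : Ar G)) = zdel s - zet := by
  simp [phi, Yr, lift_ι_apply]
@[simp] lemma jm_x : (jm X1 : Ar G) = Xr := by simp [jm, X1, lift_ι_apply]
@[simp] lemma jm_y : (jm Y1 : Ar G) = Yr 1 := by simp [jm, Y1, lift_ι_apply]

/-- `j_s : A1 → Ar`, `x ↦ x`, `y ↦ y_s`. -/
noncomputable def jrm (s : G) : A1 →ₐ[ℚ] Ar G :=
  lift ℚ (fun l => match l with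
    | LetA.x => Xr
    | LetA.y => Yr s)

@[simp] lemma jrm_x (s : G) : (jrm s X1 : Ar G) = Xr := by simp [jrm, X1, lift_ι_apply]
@[simp] lemma jrm_y (s : G) : (jrm s Y1 : Ar G) = Yr s := by simp [jrm, Y1, lift_ι_apply]

/-- `φ₁ : A1 → A1`, `x ↦ x + y`, `y ↦ -y`. -/
noncomputable def phi1 : A1 →ₐ[ℚ] A1 :=
  lift ℚ (fun l => match l with
    | LetA.x => X1 + Y1
    | LetA.y => -Y1)

/-- `χ_s : A1 → Ar`, `x ↦ z_s^δ`, `y ↦ z - z_s^δ`. -/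
noncomputable def chi (s : G) : A1 →ₐ[ℚ] Ar G :=
  lift ℚ (fun l => match l with
    | LetA.x => zdel s
    | LetA.y => zet - zdel s)

@[simp] lemma chi_x (s : G) : (chi s X1 : Ar G) = zdel s := by simp [chi, X1, lift_ι_apply]
@[simp] lemma chi_y (s : G) : (chi s Y1 : Ar G) = zet - zdel s := by
  simp [chi, Y1, lift_ι_apply]
lemma chi_z (s : G) : (chi s (X1 + Y1) : Ar G) = zet := by
  simp

end Aux

set_option linter.unusedSectionVars false

section Words
variable {G : Type} [CommGroup G]

/-- reversed word in `A1` -/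
noncomputable def rw1 : List LetA → A1
  | [] => 1
  | a :: l => rw1 l * ι ℚ a

/-- reversed word in `Ar` -/
noncomputable def rwr : List (LetR G) → Ar G
  | [] => 1
  | a :: l => rwr l * ι ℚ a

lemma rw1_mul (l l' : List LetA) : rw1 l * rw1 l' = rw1 (l' ++ l) := by
  induction l' with
  | nil => simp [rw1]
  | cons a l' ih => simp only [rw1, List.cons_append, ← mul_assoc, ih]

lemma rwr_mul (l l' : List (LetR G)) : rwr l * rwr l' = rwr (l' ++ l) := by
  induction l' with
  | nil => simp [rwr]
  | cons a l' ih => simp only [rwr, List.cons_append, ← mul_assoc, ih]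

lemma span_rw1 : Submodule.span ℚ (Set.range rw1) = ⊤ := by
  rw [eq_top_iff]
  rintro u -
  induction u using FreeAlgebra.induction with
  | grade0 r =>
    have : (algebraMap ℚ A1) r = r • rw1 [] := by simp [rw1, Algebra.smul_def]
    rw [this]
    exact Submodule.smul_mem _ _ (Submodule.subset_span ⟨[], rfl⟩)
  | grade1 x =>
    have : (ι ℚ x : A1) = rw1 [x] := by simp [rw1]
    rw [this]; exact Submodule.subset_span ⟨[x], rfl⟩
  | mul a b ha hb =>
    refine Submodule.span_induction ?_ ?_ ?_ ?_ hb
    · rintro _ ⟨l', rfl⟩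
      refine Submodule.span_induction ?_ ?_ ?_ ?_ ha
      · rintro _ ⟨l, rfl⟩
        rw [rw1_mul]
        exact Submodule.subset_span ⟨_, rfl⟩
      · simp
      · intro x y _ _ hx hy
        rw [add_mul]; exact Submodule.add_mem _ hx hy
      · intro q x _ hx
        rw [smul_mul_assoc]; exact Submodule.smul_mem _ _ hx
    · simp
    · intro x y _ _ hx hy
      rw [mul_add]; exact Submodule.add_mem _ hx hy
    · intro q x _ hx
      rw [mul_smul_comm]; exact Submodule.smul_mem _ _ hx
  | add a b ha hb => exact Submodule.add_mem _ ha hb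

lemma span_rwr : Submodule.span ℚ (Set.range (rwr (G := G))) = ⊤ := by
  rw [eq_top_iff]
  rintro u -
  induction u using FreeAlgebra.induction with
  | grade0 r =>
    have : (algebraMap ℚ (Ar G)) r = r • rwr [] := by simp [rwr, Algebra.smul_def]
    rw [this]
    exact Submodule.smul_mem _ _ (Submodule.subset_span ⟨[], rfl⟩)
  | grade1 x =>
    have : (ι ℚ x : Ar G) = rwr [x] := by simp [rwr]
    rw [this]; exact Submodule.subset_span ⟨[x], rfl⟩
  | mul a b ha hb =>
    refine Submodule.span_induction ?_ ?_ ?_ ?_ hb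
    · rintro _ ⟨l', rfl⟩
      refine Submodule.span_induction ?_ ?_ ?_ ?_ ha
      · rintro _ ⟨l, rfl⟩
        rw [rwr_mul]
        exact Submodule.subset_span ⟨_, rfl⟩
      · simp
      · intro x y _ _ hx hy
        rw [add_mul]; exact Submodule.add_mem _ hx hy
      · intro q x _ hx
        rw [smul_mul_assoc]; exact Submodule.smul_mem _ _ hx
    · simp
    · intro x y _ _ hx hy
      rw [mul_add]; exact Submodule.add_mem _ hx hy
    · intro q x _ hx
      rw [mul_smul_comm]; exact Submodule.smul_mem _ _ hx
  | add a b ha hb => exact Submodule.add_mem _ ha hb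

end Words


section Psi
variable {G : Type} [CommGroup G]

/-- `w1 K a = x^{k₁} y ⋯ x^{k_l} y x^a` in `A1`. -/
noncomputable def w1 (K : List ℕ) (a : ℕ) : A1 :=
  (K.map (fun k => X1 ^ k * Y1)).prod * X1 ^ a

lemma w1_mul (K K' : List ℕ) (a a' : ℕ) :
    w1 K a * w1 K' a' =
      match K' with
      | [] => w1 K (a + a')
      | k :: K'' => w1 (K ++ (a + k) :: K'') a' := by
  match K' with
  | [] => simp [w1, pow_add, mul_assoc]
  | k :: K'' =>
    simp only [w1, List.map_cons, List.map_append, List.prod_append, List.prod_cons,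
      pow_add, mul_assoc]

lemma span_w1 : Submodule.span ℚ (Set.range (fun p : List ℕ × ℕ => w1 p.1 p.2)) = ⊤ := by
  rw [eq_top_iff]
  rintro u -
  induction u using FreeAlgebra.induction with
  | grade0 r =>
    have : (algebraMap ℚ A1) r = r • w1 [] 0 := by simp [w1, Algebra.smul_def]
    rw [this]
    exact Submodule.smul_mem _ _ (Submodule.subset_span ⟨([], 0), rfl⟩)
  | grade1 m =>
    cases m with
    | x =>
      have : (ι ℚ LetA.x : A1) = w1 [] 1 := by simp [w1, X1]
      rw [this]; exact Submodule.subset_span ⟨([], 1), rfl⟩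
    | y =>
      have : (ι ℚ LetA.y : A1) = w1 [0] 0 := by simp [w1, Y1]
      rw [this]; exact Submodule.subset_span ⟨([0], 0), rfl⟩
  | mul a b ha hb =>
    refine Submodule.span_induction ?_ ?_ ?_ ?_ hb
    · rintro _ ⟨⟨K', a'⟩, rfl⟩
      refine Submodule.span_induction ?_ ?_ ?_ ?_ ha
      · rintro _ ⟨⟨K, a⟩, rfl⟩
        rw [w1_mul]
        match K' with
        | [] => exact Submodule.subset_span ⟨(K, a + a'), rfl⟩
        | k :: K'' => exact Submodule.subset_span ⟨(K ++ (a + k) :: K'', a'), rfl⟩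
      · simp
      · intro x y _ _ hx hy
        rw [add_mul]; exact Submodule.add_mem _ hx hy
      · intro q x _ hx
        rw [smul_mul_assoc]; exact Submodule.smul_mem _ _ hx
    · simp
    · intro x y _ _ hx hy
      rw [mul_add]; exact Submodule.add_mem _ hx hy
    · intro q x _ hx
      rw [mul_smul_comm]; exact Submodule.smul_mem _ _ hx
  | add a b ha hb => exact Submodule.add_mem _ ha hb

lemma cumul_ones (s : G) (K : List ℕ) :
    cumul s (K.map (fun k => (k, (1 : G)))) = K.map (fun k => (k, s)) := by
  induction K with
  | nil => rfl
  | cons k K ih => simp [cumul, ih]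

lemma jm_w1 (K : List ℕ) (a : ℕ) :
    (jm (w1 K a) : Ar G) = wordP (K.map (fun k => (k, (1 : G)))) * Xr ^ a := by
  simp only [w1, wordP, map_mul, map_pow, map_list_prod, List.map_map, jm_x]
  congr 2
  ext k
  simp [Function.comp, map_mul, map_pow]

lemma jrm_w1 (s : G) (K : List ℕ) (a : ℕ) :
    (jrm s (w1 K a) : Ar G) = wordP (K.map (fun k => (k, s))) * Xr ^ a := by
  simp only [w1, wordP, map_mul, map_pow, map_list_prod, List.map_map, jrm_x]
  congr 2
  ext k
  simp [Function.comp, map_mul, map_pow]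

lemma psi_jm (S : DiamondSetup G) (s : G) (u : A1) :
    S.psi s (jm u) = phi (jrm s u) := by
  have : (S.psi s).toLinearMap ∘ₗ (jm : A1 →ₐ[ℚ] Ar G).toLinearMap
      = (phi : Ar G →ₐ[ℚ] Ar G).toLinearMap ∘ₗ (jrm s : A1 →ₐ[ℚ] Ar G).toLinearMap := by
    apply LinearMap.ext_on span_w1
    rintro _ ⟨⟨K, a⟩, rfl⟩
    simp only [LinearMap.comp_apply, LinearEquiv.coe_coe, AlgHom.toLinearMap_apply]
    rw [jm_w1, jrm_w1, S.psi_spec, cumul_ones]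
  exact LinearMap.congr_fun this u

lemma phi_jm (u : A1) : (phi (jm u) : Ar G) = jm (phi1 u) := by
  have : (phi : Ar G →ₐ[ℚ] Ar G).comp jm = (jm : A1 →ₐ[ℚ] Ar G).comp phi1 := by
    apply FreeAlgebra.hom_ext
    funext l
    cases l with
    | x =>
      show phi (jm (ι ℚ LetA.x)) = jm (phi1 (ι ℚ LetA.x))
      simp only [phi1, jm, X1, Y1, lift_ι_apply, map_add, phi_x, zet]
    | y =>
      show phi (jm (ι ℚ LetA.y)) = jm (phi1 (ι ℚ LetA.y))
      simp only [phi1, jm, X1, Y1, lift_ι_apply, map_neg, phi_y, zdel_one, zet]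
      abel
  exact AlgHom.congr_fun this u

/-- The key closed form: `D s v 1 = χ_s(v)`. -/
lemma D_one_chi (S : DiamondSetup G) (s : G) (v : A1) :
    S.D s v 1 = chi s v := by
  rw [S.D_one, phi_jm, psi_jm]
  have : (phi : Ar G →ₐ[ℚ] Ar G).comp ((jrm s).comp phi1) = chi s := by
    apply FreeAlgebra.hom_ext
    funext l
    cases l with
    | x =>
      show phi (jrm s (phi1 (ι ℚ LetA.x))) = chi s (ι ℚ LetA.x)
      simp only [phi1, jrm, chi, X1, Y1, lift_ι_apply, map_add, phi_x, phi_y]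
      abel
    | y =>
      show phi (jrm s (phi1 (ι ℚ LetA.y))) = chi s (ι ℚ LetA.y)
      simp only [phi1, jrm, chi, X1, Y1, lift_ι_apply, map_neg, phi_y]
      abel
  calc phi (jrm s (phi1 v)) = ((phi : Ar G →ₐ[ℚ] Ar G).comp ((jrm s).comp phi1)) v := rfl
    _ = chi s v := by rw [this]

end Psi


section Dz
variable {G : Type} [CommGroup G]

/-- `z ⋄_s u = u z`. -/
lemma D_z (S : DiamondSetup G) (s : G) (u : Ar G) : S.D s (X1 + Y1) u = u * zet := by
  have hadd : ∀ w : Ar G, S.D s (X1 + Y1) w = S.D s X1 w + S.D s Y1 w := by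
    intro w; rw [map_add, LinearMap.add_apply]
  have hx : ∀ u' : Ar G, S.D s (X1 + Y1) (u' * Xr) = u' * Xr * zet := by
    intro u'
    have e1 := S.Dxx s 1 u'
    have e2 := S.Dyx s 1 u'
    simp only [one_mul, S.one_D] at e1 e2
    rw [hadd, e1, e2]
    unfold zet
    noncomm_ring
  have hy1 : ∀ u' : Ar G, S.D s (X1 + Y1) (u' * Yr 1) = u' * Yr 1 * zet := by
    intro u'
    have e1 := S.Dxy s 1 u'
    have e2 := S.Dyy s 1 u'
    simp only [one_mul, S.one_D] at e1 e2
    rw [hadd, e1, e2]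
    unfold zet
    noncomm_ring
  have hyt : ∀ c : G, c ≠ 1 → ∀ u' : Ar G,
      S.D s (X1 + Y1) (u' * Yr c) = u' * Yr c * zet := by
    intro c hc u'
    have e1 := S.Dxyt s c hc 1 u'
    have e2 := S.Dyyt s c hc 1 u'
    simp only [one_mul, S.one_D] at e1 e2
    rw [hadd, e1, e2]
    unfold zet
    noncomm_ring
  have h1 : S.D s (X1 + Y1) 1 = 1 * zet := by
    rw [D_one_chi, chi_z, one_mul]
  have hu : u ∈ Submodule.span ℚ (Set.range (rwr (G := G))) := by
    rw [span_rwr]; exact Submodule.mem_top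
  refine Submodule.span_induction ?_ ?_ ?_ ?_ hu
  · rintro _ ⟨l, rfl⟩
    cases l with
    | nil => exact h1
    | cons b l' =>
      cases b with
      | x => exact hx (rwr l')
      | y c =>
        rcases eq_or_ne c 1 with rfl | hc
        · exact hy1 (rwr l')
        · exact hyt c hc (rwr l')
  · simp
  · intro a b _ _ ha hb
    rw [map_add, ha, hb, add_mul]
  · intro q a _ ha
    rw [map_smul, ha, smul_mul_assoc]

end Dz


section Key
variable {G : Type} [CommGroup G]

lemma rwr_x (l : List (LetR G)) : rwr (LetR.x :: l) = rwr l * Xr := rfl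
lemma rwr_y (c : G) (l : List (LetR G)) : rwr (LetR.y c :: l) = rwr l * Yr c := rfl
lemma rw1_x (l : List LetA) : rw1 (LetA.x :: l) = rw1 l * X1 := rfl
lemma rw1_y (l : List LetA) : rw1 (LetA.y :: l) = rw1 l * Y1 := rfl
lemma rwr_nil : rwr (G := G) [] = 1 := rfl
lemma rw1_nil : rw1 [] = 1 := rfl

set_option maxHeartbeats 1600000 in
lemma key (S : DiamondSetup G) (n : ℕ) :
    ∀ (lv : List LetA) (lw : List (LetR G)), lv.length + lw.length = n → ∀ s t : G,
      S.D s ((X1 + Y1) * rw1 lv) (zdel t * rwr lw) =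
        zet * S.D s (rw1 lv) (zdel t * rwr lw)
          + zdel t * S.D t ((X1 + Y1) * rw1 lv) (rwr lw)
          - zet * zdel t * S.D t (rw1 lv) (rwr lw) := by
  induction n using Nat.strong_induction_on with
  | _ n ih =>
  intro lv lw hlen s t
  cases lv with
  | nil =>
    simp only [rw1_nil, mul_one]
    rw [D_z, D_z, S.one_D, S.one_D]
    noncomm_ring
  | cons a lv' =>
    cases lw with
    | nil =>
      -- base case w = 1
      simp only [rwr_nil, mul_one]
      rcases eq_or_ne t 1 with rfl | ht
      · -- t = 1
        rw [zdel_one]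
        have IH1 := ih lv'.length
          (by simp only [List.length_cons] at hlen; omega) lv' [] rfl s 1
        simp only [rwr_nil, mul_one, zdel_one] at IH1
        cases a with
        | x =>
          simp only [rw1_x, ← mul_assoc]
          have e1 := S.Dxx s ((X1 + Y1) * rw1 lv') 1
          have e2 := S.Dxx s (rw1 lv') 1
          simp only [one_mul] at e1 e2
          rw [e1, e2, IH1]
          simp only [D_one_chi, map_mul, map_add, chi_x, chi_y, zdel_one]
          unfold zet
          noncomm_ring
        | y =>
          simp only [rw1_y, ← mul_assoc]
          have e1 := S.Dyx s ((X1 + Y1) * rw1 lv') 1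
          have e2 := S.Dyx s (rw1 lv') 1
          simp only [one_mul] at e1 e2
          rw [e1, e2, IH1]
          simp only [D_one_chi, map_mul, map_add, chi_x, chi_y, zdel_one]
          unfold zet
          noncomm_ring
      · -- t ≠ 1
        rw [zdel_ne ht]
        have IH1 := ih lv'.length
          (by simp only [List.length_cons] at hlen; omega) lv' [] rfl s 1
        simp only [rwr_nil, mul_one, zdel_one] at IH1
        have IHt := ih lv'.length
          (by simp only [List.length_cons] at hlen; omega) lv' [] rfl s t
        simp only [rwr_nil, mul_one, zdel_ne ht, map_add] at IHt
        have hy := eq_sub_of_add_eq' IHt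
        cases a with
        | x =>
          simp only [rw1_x, ← mul_assoc, map_add]
          have e1 := S.Dxx s ((X1 + Y1) * rw1 lv') 1
          have e2 := S.Dxyt s t ht ((X1 + Y1) * rw1 lv') 1
          have e3 := S.Dxx s (rw1 lv') 1
          have e4 := S.Dxyt s t ht (rw1 lv') 1
          simp only [one_mul, map_add] at e1 e2 e3 e4
          rw [e1, e2, e3, e4, hy, IH1]
          simp only [D_one_chi, map_mul, map_add, chi_x, chi_y, zdel_ne ht, zdel_one]
          unfold zet
          noncomm_ring
        | y =>
          simp only [rw1_y, ← mul_assoc, map_add]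
          have e1 := S.Dyx s ((X1 + Y1) * rw1 lv') 1
          have e2 := S.Dyyt s t ht ((X1 + Y1) * rw1 lv') 1
          have e3 := S.Dyx s (rw1 lv') 1
          have e4 := S.Dyyt s t ht (rw1 lv') 1
          simp only [one_mul, map_add] at e1 e2 e3 e4
          rw [e1, e2, e3, e4, hy, IH1]
          simp only [D_one_chi, map_mul, map_add, chi_x, chi_y, zdel_ne ht, zdel_one]
          unfold zet
          noncomm_ring
    | cons b lw' =>
      -- step case w = w' * letter
      cases b with
      | x =>
        have IH1 := ih (lv'.length + (lw'.length + 1))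
          (by simp only [List.length_cons] at hlen ⊢; omega) lv' (LetR.x :: lw') rfl s t
        have IH2 := ih ((lv'.length + 1) + lw'.length)
          (by simp only [List.length_cons] at hlen ⊢; omega) (LetA.y :: lv') lw' rfl s t
        simp only [rwr_x, rw1_y, ← mul_assoc] at IH1 IH2
        cases a with
        | x =>
          simp only [rw1_x, rwr_x, ← mul_assoc]
          rw [S.Dxx s ((X1 + Y1) * rw1 lv') (zdel t * rwr lw'),
            S.Dxx s (rw1 lv') (zdel t * rwr lw'),
            S.Dxx t ((X1 + Y1) * rw1 lv') (rwr lw'),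
            S.Dxx t (rw1 lv') (rwr lw'), IH1, IH2]
          noncomm_ring
        | y =>
          simp only [rw1_y, rwr_x, ← mul_assoc]
          rw [S.Dyx s ((X1 + Y1) * rw1 lv') (zdel t * rwr lw'),
            S.Dyx s (rw1 lv') (zdel t * rwr lw'),
            S.Dyx t ((X1 + Y1) * rw1 lv') (rwr lw'),
            S.Dyx t (rw1 lv') (rwr lw'), IH1, IH2]
          noncomm_ring
      | y c =>
        rcases eq_or_ne c 1 with rfl | hc
        · -- letter y_1
          have IH1 := ih (lv'.length + (lw'.length + 1))
            (by simp only [List.length_cons] at hlen ⊢; omega) lv' (LetR.y 1 :: lw') rfl s t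
          cases a with
          | x =>
            have IH2 := ih ((lv'.length + 1) + lw'.length)
              (by simp only [List.length_cons] at hlen ⊢; omega) (LetA.x :: lv') lw' rfl s t
            simp only [rwr_y, rw1_x, ← mul_assoc] at IH1 IH2
            simp only [rw1_x, rwr_y, ← mul_assoc]
            rw [S.Dxy s ((X1 + Y1) * rw1 lv') (zdel t * rwr lw'),
              S.Dxy s (rw1 lv') (zdel t * rwr lw'),
              S.Dxy t ((X1 + Y1) * rw1 lv') (rwr lw'),
              S.Dxy t (rw1 lv') (rwr lw'), IH1, IH2]
            noncomm_ring
          | y =>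
            have IH2 := ih ((lv'.length + 1) + lw'.length)
              (by simp only [List.length_cons] at hlen ⊢; omega) (LetA.x :: lv') lw' rfl s t
            simp only [rwr_y, rw1_x, ← mul_assoc] at IH1 IH2
            simp only [rw1_y, rwr_y, ← mul_assoc]
            rw [S.Dyy s ((X1 + Y1) * rw1 lv') (zdel t * rwr lw'),
              S.Dyy s (rw1 lv') (zdel t * rwr lw'),
              S.Dyy t ((X1 + Y1) * rw1 lv') (rwr lw'),
              S.Dyy t (rw1 lv') (rwr lw'), IH1, IH2]
            noncomm_ring
        · -- letter y_c, c ≠ 1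
          have IHyc := ih (lv'.length + (lw'.length + 1))
            (by simp only [List.length_cons] at hlen ⊢; omega) lv' (LetR.y c :: lw') rfl s t
          have IHx := ih (lv'.length + (lw'.length + 1))
            (by simp only [List.length_cons] at hlen ⊢; omega) lv' (LetR.x :: lw') rfl s t
          have IHy := ih ((lv'.length + 1) + lw'.length)
            (by simp only [List.length_cons] at hlen ⊢; omega) (LetA.y :: lv') lw' rfl s t
          simp only [rwr_y, rwr_x, rw1_y, ← mul_assoc] at IHyc IHx IHy
          cases a with
          | x =>
            simp only [rw1_x, rwr_y, ← mul_assoc]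
            have e1 := S.Dxyt s c hc ((X1 + Y1) * rw1 lv') (zdel t * rwr lw')
            have e2 := S.Dxyt s c hc (rw1 lv') (zdel t * rwr lw')
            have e3 := S.Dxyt t c hc ((X1 + Y1) * rw1 lv') (rwr lw')
            have e4 := S.Dxyt t c hc (rw1 lv') (rwr lw')
            simp only [mul_add, map_add] at e1 e2 e3 e4
            rw [e1, e2, e3, e4, IHyc, IHx, IHy]
            noncomm_ring
          | y =>
            simp only [rw1_y, rwr_y, ← mul_assoc]
            have e1 := S.Dyyt s c hc ((X1 + Y1) * rw1 lv') (zdel t * rwr lw')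
            have e2 := S.Dyyt s c hc (rw1 lv') (zdel t * rwr lw')
            have e3 := S.Dyyt t c hc ((X1 + Y1) * rw1 lv') (rwr lw')
            have e4 := S.Dyyt t c hc (rw1 lv') (rwr lw')
            simp only [mul_add, map_add] at e1 e2 e3 e4
            rw [e1, e2, e3, e4, IHyc, IHx, IHy]
            noncomm_ring

end Key


theorem statement14_aux {G : Type} [CommGroup G] (S : DiamondSetup G)
    (s t : G) (v : A1) (w : Ar G) :
    S.D s ((X1 + Y1) * v) (zdel t * w) =
      zet * S.D s v (zdel t * w) + zdel t * S.D t ((X1 + Y1) * v) w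
        - zet * zdel t * S.D t v w := by
  let F1 : A1 →ₗ[ℚ] Ar G →ₗ[ℚ] Ar G :=
    ((S.D s).comp (LinearMap.mulLeft ℚ (X1 + Y1))).compl₂ (LinearMap.mulLeft ℚ (zdel t))
  let F2 : A1 →ₗ[ℚ] Ar G →ₗ[ℚ] Ar G :=
    ((S.D s).compl₂ (LinearMap.mulLeft ℚ (zdel t))).compr₂ (LinearMap.mulLeft ℚ zet)
  let F3 : A1 →ₗ[ℚ] Ar G →ₗ[ℚ] Ar G :=
    ((S.D t).comp (LinearMap.mulLeft ℚ (X1 + Y1))).compr₂ (LinearMap.mulLeft ℚ (zdel t))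
  let F4 : A1 →ₗ[ℚ] Ar G →ₗ[ℚ] Ar G :=
    (S.D t).compr₂ (LinearMap.mulLeft ℚ (zet * zdel t))
  have hF : F1 = F2 + F3 - F4 := by
    apply LinearMap.ext_on span_rw1
    intro x hx
    obtain ⟨lv, rfl⟩ := hx
    apply LinearMap.ext_on span_rwr
    intro y hy
    obtain ⟨lw, rfl⟩ := hy
    simp only [F1, F2, F3, F4, LinearMap.compl₂_apply, LinearMap.compr₂_apply,
      LinearMap.comp_apply, LinearMap.mulLeft_apply, LinearMap.add_apply,
      LinearMap.sub_apply]
    rw [key S (lv.length + lw.length) lv lw rfl s t]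
  have h := LinearMap.congr_fun (LinearMap.congr_fun hF v) w
  simpa only [F1, F2, F3, F4, LinearMap.compl₂_apply, LinearMap.compr₂_apply,
    LinearMap.comp_apply, LinearMap.mulLeft_apply, LinearMap.add_apply,
    LinearMap.sub_apply, mul_assoc] using h

/-- For all `s, t ∈ μ_r`, `v ∈ A_1`, `w ∈ A_r`:
`(zv) ⋄_s (z_t^δ w) = z(v ⋄_s z_t^δ w) + z_t^δ(zv ⋄_t w) − z z_t^δ(v ⋄_t w)`. -/
theorem statement14 {G : Type} [CommGroup G] (S : DiamondSetup G)
    (s t : G) (v : A1) (w : Ar G) :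
    S.D s ((X1 + Y1) * v) (zdel t * w) =
      zet * S.D s v (zdel t * w) + zdel t * S.D t ((X1 + Y1) * v) w
        - zet * zdel t * S.D t v w :=
  statement14_aux S s t v w
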